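/- Let P be a finite graded poset of rank n with 0̂ and 1̂ having an S_n EL-labeling, with operators U_i as above. Then U_i U_{i+1} U_i = U_{i+1} U_i U_{i+1} for i = 1,...,n−2. -/
import Mathlib


/-! Common definitions: graded posets, saturated/maximal chains, EL-labelings,
inversions and weak order on permutations, descent operators, flag vectors. -/

section Perm

/-- The inversion set `INV(v) = {(v j, v i) : i < j, v i > v j}` of a permutation of `Fin n`. -/
def invSet {n : ℕ} (v : Equiv.Perm (Fin n)) : Set (Fin n × Fin n) :=
  {p | ∃ i j : Fin n, i < j ∧ v j = p.1 ∧ v i = p.2 ∧ v j < v i}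

/-- The number of inversions of a permutation. -/
noncomputable def invCount {n : ℕ} (v : Equiv.Perm (Fin n)) : ℕ :=
  (invSet v).ncard

/-- The adjacent transposition swapping `i` and `i+1` (0-indexed) in `Fin n`
(junk value `1` if out of range). -/
def adjSwap (n : ℕ) (i : ℕ) : Equiv.Perm (Fin n) :=
  if h : i + 1 < n then Equiv.swap ⟨i, Nat.lt_of_succ_lt h⟩ ⟨i + 1, h⟩ else 1

/-- One step of the right weak order: `v` is obtained from `w` by multiplying on the
right by an adjacent transposition which removes exactly one inversion. -/
def weakStep {n : ℕ} (w v : Equiv.Perm (Fin n)) : Prop :=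
  ∃ i : ℕ, i + 1 < n ∧ v = w * adjSwap n i ∧ invCount v + 1 = invCount w

/-- Right weak order: `v ≤_R w` iff `v` is obtained from `w` by a sequence of
inversion-removing right multiplications by adjacent transpositions. -/
def leRW {n : ℕ} (v w : Equiv.Perm (Fin n)) : Prop :=
  Relation.ReflTransGen weakStep w v

end Perm

section Posets

variable {P : Type*}

/-- `c` (an `ℕ`-indexed sequence, constant equal to `y` from index `k` on) is a saturated
chain `x = c 0 ⋖ c 1 ⋖ ⋯ ⋖ c k = y` of length `k` from `x` to `y`. -/
def IsSatChain [PartialOrder P] (k : ℕ) (c : ℕ → P) (x y : P) : Prop :=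
  c 0 = x ∧ (∀ j, k ≤ j → c j = y) ∧ ∀ j, j < k → c j ⋖ c (j + 1)

/-- The chain `c` of length `k` has (weakly) increasing labels. -/
def IncreasingChain [PartialOrder P] (lab : P → P → ℤ) (k : ℕ) (c : ℕ → P) : Prop :=
  ∀ j, j + 1 < k → lab (c j) (c (j + 1)) ≤ lab (c (j + 1)) (c (j + 2))

/-- The label word of length-`k` chain `c` lexicographically strictly precedes that of `d`. -/
def LexLt [PartialOrder P] (lab : P → P → ℤ) (k : ℕ) (c d : ℕ → P) : Prop :=
  ∃ i < k, (∀ j, j < i → lab (c j) (c (j + 1)) = lab (d j) (d (j + 1))) ∧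
    lab (c i) (c (i + 1)) < lab (d i) (d (i + 1))

/-- `lab` is an EL-labeling: in every interval `[x,y]` (containing a saturated chain of
length `k`), there is a unique maximal chain with increasing labels, and it is
lexicographically strictly smaller than every other maximal chain of the interval. -/
def IsELLabeling [PartialOrder P] (lab : P → P → ℤ) : Prop :=
  ∀ x y : P, x < y → ∀ k : ℕ, (∃ c, IsSatChain k c x y) →
    (∃! c, IsSatChain k c x y ∧ IncreasingChain lab k c) ∧
    ∀ c d, IsSatChain k c x y → IncreasingChain lab k c → IsSatChain k d x y → c ≠ d →
      LexLt lab k c d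

/-- `rk` is a rank function making `P` a graded poset of rank `n`, with `rk ⊥ = 0`,
`rk ⊤ = n`, and ranks increasing by one along covers. -/
def IsGraded [PartialOrder P] [BoundedOrder P] (n : ℕ) (rk : P → ℕ) : Prop :=
  rk (⊥ : P) = 0 ∧ rk (⊤ : P) = n ∧ ∀ x y : P, x ⋖ y → rk y = rk x + 1

/-- `lab` is an `S_n` EL-labeling: an EL-labeling such that the label word of every
maximal chain of `P` is a permutation of `{1, …, n}`. -/
def IsSnELLabeling [PartialOrder P] [BoundedOrder P] (n : ℕ) (lab : P → P → ℤ) : Prop :=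
  IsELLabeling lab ∧
    ∀ c : ℕ → P, IsSatChain n c ⊥ ⊤ →
      ∃ σ : Equiv.Perm (Fin n), ∀ j : Fin n, lab (c j) (c ((j : ℕ) + 1)) = ((σ j : ℕ) : ℤ) + 1

/-- The maximal chains of a graded bounded poset of rank `n`. -/
abbrev MaxChain (n : ℕ) (P : Type*) [PartialOrder P] [BoundedOrder P] :=
  {c : ℕ → P // IsSatChain n c ⊥ ⊤}

/-- The label word of `c` has a descent at position `i` (meaningful for `1 ≤ i ≤ n-1`):
the label of the `i`-th edge exceeds the label of the `(i+1)`-st edge. -/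
def DescentAt [PartialOrder P] (lab : P → P → ℤ) (c : ℕ → P) (i : ℕ) : Prop :=
  lab (c i) (c (i + 1)) < lab (c (i - 1)) (c i)

/-- The maximal chain `c` has label word (the permutation) `σ`, where the label of the
`j`-th edge is `σ(j)` (written 1-indexed: the value `(σ j) + 1`). -/
def HasWord [PartialOrder P] (lab : P → P → ℤ) {n : ℕ} (c : ℕ → P)
    (σ : Equiv.Perm (Fin n)) : Prop :=
  ∀ j : Fin n, lab (c j) (c ((j : ℕ) + 1)) = ((σ j : ℕ) : ℤ) + 1

/-- The defining property of the descent-removing operators `U_i` attached to an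
`S_n` EL-labeling: `U i m` agrees with `m` away from rank `i` and has no descent at `i`. -/
def IsUSystem [PartialOrder P] [BoundedOrder P] (n : ℕ) (lab : P → P → ℤ)
    (U : ℕ → MaxChain n P → MaxChain n P) : Prop :=
  ∀ i, 1 ≤ i → i < n → ∀ m : MaxChain n P,
    (∀ j, j ≠ i → (U i m).1 j = m.1 j) ∧ ¬ DescentAt lab (U i m).1 i

/-- `m'` lies in the closure of the maximal chain `m` under the operators `U_i`. -/
def InClosure [PartialOrder P] [BoundedOrder P] (n : ℕ)
    (U : ℕ → MaxChain n P → MaxChain n P) (m m' : MaxChain n P) : Prop :=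
  ∃ l : List ℕ, (∀ i ∈ l, 1 ≤ i ∧ i < n) ∧ List.foldr U m l = m'

/-- `α_P(S)`: the number of chains of `P` whose rank set is exactly `S`. -/
noncomputable def alphaP [PartialOrder P] (rk : P → ℕ) (S : Finset ℕ) : ℕ :=
  Nat.card {t : Finset P // IsChain (· ≤ ·) (t : Set P) ∧ t.image rk = S ∧ t.card = S.card}

/-- The flag `h`-vector `β_P(S) = ∑_{T ⊆ S} (-1)^{|S - T|} α_P(T)`. -/
noncomputable def betaP [PartialOrder P] (rk : P → ℕ) (S : Finset ℕ) : ℤ :=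
  ∑ T ∈ S.powerset, (-1 : ℤ) ^ (S.card - T.card) * (alphaP rk T : ℤ)

/-- `P` is bowtie-free: there are no distinct `a, b, c, d` with `a` and `b` each
covering both `c` and `d`. -/
def BowtieFree (P : Type*) [PartialOrder P] : Prop :=
  ∀ a b c d : P, c ⋖ a → d ⋖ a → c ⋖ b → d ⋖ b → a = b ∨ c = d

/-- The operators `U_i`, `1 ≤ i ≤ n-1`, form a local 0-Hecke action on the maximal
chains: they are local at rank `i`, idempotent, commute at distance `≥ 2`, and
satisfy the braid relations. -/
def IsLocalHeckeAction [PartialOrder P] [BoundedOrder P] (n : ℕ)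
    (U : ℕ → MaxChain n P → MaxChain n P) : Prop :=
  (∀ i, 1 ≤ i → i < n → ∀ m : MaxChain n P, ∀ j, j ≠ i → (U i m).1 j = m.1 j) ∧
  (∀ i, 1 ≤ i → i < n → ∀ m, U i (U i m) = U i m) ∧
  (∀ i j, 1 ≤ i → i < n → 1 ≤ j → j < n → i + 2 ≤ j → ∀ m, U i (U j m) = U j (U i m)) ∧
  (∀ i, 1 ≤ i → i + 1 < n → ∀ m,
    U i (U (i + 1) (U i m)) = U (i + 1) (U i (U (i + 1) m)))

/-- A good `H_n(0)` action: a local 0-Hecke action on the maximal chains such that for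
every `S ⊆ [n-1]`, `α_P(S)` equals the number of maximal chains whose descent set
`{i : U_i m ≠ m}` is contained in `S` (equivalently, `ω F_P = ch χ_P`). -/
def IsGoodHeckeAction [PartialOrder P] [BoundedOrder P] (n : ℕ) (rk : P → ℕ)
    (U : ℕ → MaxChain n P → MaxChain n P) : Prop :=
  IsLocalHeckeAction n U ∧
    ∀ S : Finset ℕ, S ⊆ Finset.Icc 1 (n - 1) →
      alphaP rk S =
        Nat.card {m : MaxChain n P // ∀ i, 1 ≤ i → i < n → U i m ≠ m → i ∈ S}

/-- An expression `U_{i_1} ⋯ U_{i_r} (m) = m'` (the list `l = [i_1, …, i_r]`, applied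
right-to-left) is restless: every single application strictly changes the chain. -/
def Restless [PartialOrder P] [BoundedOrder P] {n : ℕ}
    (U : ℕ → MaxChain n P → MaxChain n P) (l : List ℕ) (m m' : MaxChain n P) : Prop :=
  List.foldr U m l = m' ∧
    ∀ i t, (i :: t) <:+ l → U i (List.foldr U m t) ≠ List.foldr U m t

/-- A subset of a lattice closed under join and meet. -/
def SublClosed [Lattice P] (t : Set P) : Prop :=
  ∀ a ∈ t, ∀ b ∈ t, a ⊔ b ∈ t ∧ a ⊓ b ∈ t

/-- The sublattice generated by the set `s`. -/
def genSub [Lattice P] (s : Set P) : Set P :=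
  ⋂₀ {t : Set P | s ⊆ t ∧ SublClosed t}

/-- The subset `t` is distributive (as a sublattice). -/
def DistribOn [Lattice P] (t : Set P) : Prop :=
  ∀ a ∈ t, ∀ b ∈ t, ∀ c ∈ t, a ⊓ (b ⊔ c) = (a ⊓ b) ⊔ (a ⊓ c)

/-- A lattice (graded, of rank `n`) is supersolvable if it has a maximal chain (an
M-chain) which together with any other chain generates a distributive sublattice. -/
def Supersolvable (n : ℕ) (P : Type*) [Lattice P] [BoundedOrder P] : Prop :=
  ∃ M : MaxChain n P, ∀ c : Set P, IsChain (· ≤ ·) c →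
    DistribOn (genSub (Set.range M.1 ∪ c))

end Posets

section BraidAux

variable {P : Type*} [PartialOrder P] [BoundedOrder P]

/-- Restriction of a maximal chain to a saturated chain of an interval. -/
lemma restrict_sat {n : ℕ} {c : ℕ → P} (hc : IsSatChain n c ⊥ ⊤)
    (p k : ℕ) (hpk : p + k ≤ n) :
    IsSatChain k (fun j => c (p + min j k)) (c p) (c (p + k)) := by
  refine ⟨by simp, fun j hj => by simp [min_eq_right hj], fun j hj => ?_⟩
  have h1 : min j k = j := min_eq_left hj.le
  have h2 : min (j + 1) k = j + 1 := min_eq_left hj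
  simp only [h1, h2]
  exact hc.2.2 (p + j) (by omega)

/-- Two maximal chains agreeing off rank `i`, both with no descent at `i`, coincide. -/
lemma chain_unique2 {n : ℕ} (lab : P → P → ℤ) (hsn : IsSnELLabeling n lab)
    {i : ℕ} (hi1 : 1 ≤ i) (hin : i < n)
    (c d : MaxChain n P) (hcd : ∀ j, j ≠ i → c.1 j = d.1 j)
    (hc : ¬ DescentAt lab c.1 i) (hd : ¬ DescentAt lab d.1 i) : c = d := by
  have e2 : i - 1 + 2 = i + 1 := by omega
  have e1 : i - 1 + 1 = i := by omega
  have hx : c.1 (i - 1) = d.1 (i - 1) := hcd _ (by omega)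
  have hy : c.1 (i + 1) = d.1 (i + 1) := hcd _ (by omega)
  set cc : ℕ → P := fun j => c.1 (i - 1 + min j 2) with hccdef
  set dd : ℕ → P := fun j => d.1 (i - 1 + min j 2) with hdddef
  have hsatc : IsSatChain 2 cc (c.1 (i - 1)) (c.1 (i + 1)) := by
    have := restrict_sat c.2 (i - 1) 2 (by omega)
    rwa [e2] at this
  have hsatd : IsSatChain 2 dd (c.1 (i - 1)) (c.1 (i + 1)) := by
    have := restrict_sat d.2 (i - 1) 2 (by omega)
    rw [e2] at this
    rwa [← hx, ← hy] at this
  have hcc0 : cc 0 = c.1 (i - 1) := by simp [hccdef]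
  have hcc1 : cc 1 = c.1 i := by simp [hccdef, e1]
  have hcc2 : cc 2 = c.1 (i + 1) := by simp [hccdef, e2]
  have hdd1 : dd 1 = d.1 i := by simp [hdddef, e1]
  have hincc : IncreasingChain lab 2 cc := by
    intro j hj
    have hj0 : j = 0 := by omega
    subst hj0
    rw [hcc0, hcc1, hcc2]
    exact not_lt.mp hc
  have hincd : IncreasingChain lab 2 dd := by
    intro j hj
    have hj0 : j = 0 := by omega
    subst hj0
    have hdd0 : dd 0 = d.1 (i - 1) := by simp [hdddef]
    have hdd2 : dd 2 = d.1 (i + 1) := by simp [hdddef, e2]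
    rw [hdd0, hdd1, hdd2]
    exact not_lt.mp hd
  have hlt : c.1 (i - 1) < c.1 (i + 1) := by
    have h1 := (c.2.2.2 (i - 1) (by omega)).lt
    have h2 := (c.2.2.2 i hin).lt
    rw [e1] at h1
    exact h1.trans h2
  obtain ⟨hex, -⟩ := hsn.1 _ _ hlt 2 ⟨cc, hsatc⟩
  have heq : cc = dd := hex.unique ⟨hsatc, hincc⟩ ⟨hsatd, hincd⟩
  have hval : c.1 i = d.1 i := by
    rw [← hcc1, ← hdd1, heq]
  apply Subtype.ext
  funext j
  by_cases hj : j = i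
  · rw [hj]; exact hval
  · exact hcd j hj

/-- Two maximal chains agreeing off ranks `i, i+1`, both increasing there, coincide. -/
lemma chain_unique3 {n : ℕ} (lab : P → P → ℤ) (hsn : IsSnELLabeling n lab)
    {i : ℕ} (hi1 : 1 ≤ i) (hin : i + 1 < n)
    (c d : MaxChain n P) (hcd : ∀ j, j ≠ i → j ≠ i + 1 → c.1 j = d.1 j)
    (hc1 : ¬ DescentAt lab c.1 i) (hc2 : ¬ DescentAt lab c.1 (i + 1))
    (hd1 : ¬ DescentAt lab d.1 i) (hd2 : ¬ DescentAt lab d.1 (i + 1)) : c = d := by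
  have e1 : i - 1 + 1 = i := by omega
  have e2 : i - 1 + 2 = i + 1 := by omega
  have e3 : i - 1 + 3 = i + 2 := by omega
  have hx : c.1 (i - 1) = d.1 (i - 1) := hcd _ (by omega) (by omega)
  have hy : c.1 (i + 2) = d.1 (i + 2) := hcd _ (by omega) (by omega)
  set cc : ℕ → P := fun j => c.1 (i - 1 + min j 3) with hccdef
  set dd : ℕ → P := fun j => d.1 (i - 1 + min j 3) with hdddef
  have hsatc : IsSatChain 3 cc (c.1 (i - 1)) (c.1 (i + 2)) := by
    have := restrict_sat c.2 (i - 1) 3 (by omega)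
    rwa [e3] at this
  have hsatd : IsSatChain 3 dd (c.1 (i - 1)) (c.1 (i + 2)) := by
    have := restrict_sat d.2 (i - 1) 3 (by omega)
    rw [e3] at this
    rwa [← hx, ← hy] at this
  have hcc0 : cc 0 = c.1 (i - 1) := by simp [hccdef]
  have hcc1 : cc 1 = c.1 i := by simp [hccdef, e1]
  have hcc2 : cc 2 = c.1 (i + 1) := by simp [hccdef, e2]
  have hcc3 : cc 3 = c.1 (i + 2) := by simp [hccdef, e3]
  have hdd0 : dd 0 = d.1 (i - 1) := by simp [hdddef]
  have hdd1 : dd 1 = d.1 i := by simp [hdddef, e1]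
  have hdd2 : dd 2 = d.1 (i + 1) := by simp [hdddef, e2]
  have hdd3 : dd 3 = d.1 (i + 2) := by simp [hdddef, e3]
  have hincc : IncreasingChain lab 3 cc := by
    intro j hj
    rcases (by omega : j = 0 ∨ j = 1) with rfl | rfl
    · rw [hcc0, hcc1, hcc2]; exact not_lt.mp hc1
    · rw [hcc1, hcc2, hcc3]
      have := not_lt.mp hc2
      simpa using this
  have hincd : IncreasingChain lab 3 dd := by
    intro j hj
    rcases (by omega : j = 0 ∨ j = 1) with rfl | rfl
    · rw [hdd0, hdd1, hdd2]; exact not_lt.mp hd1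
    · rw [hdd1, hdd2, hdd3]
      have := not_lt.mp hd2
      simpa using this
  have hlt : c.1 (i - 1) < c.1 (i + 2) := by
    have h1 := (c.2.2.2 (i - 1) (by omega)).lt
    have h2 := (c.2.2.2 i (by omega)).lt
    have h3 := (c.2.2.2 (i + 1) hin).lt
    rw [e1] at h1
    exact (h1.trans h2).trans h3
  obtain ⟨hex, -⟩ := hsn.1 _ _ hlt 3 ⟨cc, hsatc⟩
  have heq : cc = dd := hex.unique ⟨hsatc, hincc⟩ ⟨hsatd, hincd⟩
  apply Subtype.ext
  funext j
  by_cases hj : j = i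
  · rw [hj, ← hcc1, ← hdd1, heq]
  by_cases hj' : j = i + 1
  · rw [hj', ← hcc2, ← hdd2, heq]
  exact hcd j hj hj'

/-- For maximal chains agreeing off rank `i`, the labels of the two edges
around rank `i` either agree or are swapped. -/
lemma label_pair {n : ℕ} (lab : P → P → ℤ) (hsn : IsSnELLabeling n lab)
    {i : ℕ} (hi1 : 1 ≤ i) (hin : i < n)
    (c d : MaxChain n P) (hcd : ∀ j, j ≠ i → c.1 j = d.1 j) :
    (lab (d.1 (i - 1)) (d.1 i) = lab (c.1 (i - 1)) (c.1 i) ∧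
     lab (d.1 i) (d.1 (i + 1)) = lab (c.1 i) (c.1 (i + 1))) ∨
    (lab (d.1 (i - 1)) (d.1 i) = lab (c.1 i) (c.1 (i + 1)) ∧
     lab (d.1 i) (d.1 (i + 1)) = lab (c.1 (i - 1)) (c.1 i)) := by
  obtain ⟨σ, hσ⟩ := hsn.2 c.1 c.2
  obtain ⟨τ, hτ⟩ := hsn.2 d.1 d.2
  set I1 : Fin n := ⟨i - 1, by omega⟩ with hI1
  set I2 : Fin n := ⟨i, hin⟩ with hI2
  have e1 : i - 1 + 1 = i := by omega
  have hagree : ∀ j : Fin n, j ≠ I1 → j ≠ I2 → σ j = τ j := by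
    intro j h1 h2
    have hj1 : (j : ℕ) ≠ i := fun h => h2 (Fin.ext h)
    have hj2 : (j : ℕ) + 1 ≠ i := by
      intro h
      exact h1 (Fin.ext (show (j : ℕ) = i - 1 from by omega))
    have hc1 : c.1 (j : ℕ) = d.1 (j : ℕ) := hcd _ hj1
    have hc2 : c.1 ((j : ℕ) + 1) = d.1 ((j : ℕ) + 1) := hcd _ hj2
    have hst : ((σ j : ℕ) : ℤ) + 1 = ((τ j : ℕ) : ℤ) + 1 := by
      rw [← hσ j, hc1, hc2, hτ j]
    have hval : (σ j : ℕ) = (τ j : ℕ) := by exact_mod_cast add_right_cancel hst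
    exact Fin.ext hval
  have hI12 : I1 ≠ I2 := by
    intro h
    have hv : i - 1 = i := congrArg Fin.val h
    omega
  have hmem : ∀ k : Fin n, k = I1 ∨ k = I2 → (τ k = σ I1 ∨ τ k = σ I2) := by
    intro k hk
    obtain ⟨j, hj⟩ := σ.surjective (τ k)
    by_cases h1 : j = I1
    · left; rw [← hj, h1]
    by_cases h2 : j = I2
    · right; rw [← hj, h2]
    exfalso
    have hjk : τ j = τ k := (hagree j h1 h2).symm.trans hj
    have hkj : j = k := τ.injective hjk
    rcases hk with hk | hk
    · exact h1 (hkj.trans hk)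
    · exact h2 (hkj.trans hk)
  have hτne : τ I1 ≠ τ I2 := fun h => hI12 (τ.injective h)
  have hlab : ∀ (e : MaxChain n P) (ρ : Equiv.Perm (Fin n))
      (_ : ∀ j : Fin n, lab (e.1 j) (e.1 ((j : ℕ) + 1)) = ((ρ j : ℕ) : ℤ) + 1),
      lab (e.1 (i - 1)) (e.1 i) = ((ρ I1 : ℕ) : ℤ) + 1 ∧
      lab (e.1 i) (e.1 (i + 1)) = ((ρ I2 : ℕ) : ℤ) + 1 := by
    intro e ρ hρ
    constructor
    · have := hρ I1
      simpa [hI1, e1] using this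
    · have := hρ I2
      simpa [hI2] using this
    
  obtain ⟨hcA, hcB⟩ := hlab c σ hσ
  obtain ⟨hdA, hdB⟩ := hlab d τ hτ
  rcases hmem I1 (Or.inl rfl) with h1 | h1
  · left
    have h2 : τ I2 = σ I2 := by
      rcases hmem I2 (Or.inr rfl) with h2 | h2
      · exact absurd (h1.trans h2.symm) hτne
      · exact h2
    exact ⟨by rw [hdA, hcA, h1], by rw [hdB, hcB, h2]⟩
  · right
    have h2 : τ I2 = σ I1 := by
      rcases hmem I2 (Or.inr rfl) with h2 | h2
      · exact h2
      · exact absurd (h1.trans h2.symm) hτne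
    exact ⟨by rw [hdA, hcB, h1], by rw [hdB, hcA, h2]⟩

/-- The labels of `U k m` around rank `k` are the sorted labels of `m`. -/
lemma U_labels {n : ℕ} (lab : P → P → ℤ)
    (hsn : IsSnELLabeling n lab) (U : ℕ → MaxChain n P → MaxChain n P)
    (hU : IsUSystem n lab U) {k : ℕ} (hk1 : 1 ≤ k) (hkn : k < n)
    (m : MaxChain n P) :
    lab ((U k m).1 (k - 1)) ((U k m).1 k)
        = min (lab (m.1 (k - 1)) (m.1 k)) (lab (m.1 k) (m.1 (k + 1))) ∧
    lab ((U k m).1 k) ((U k m).1 (k + 1))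
        = max (lab (m.1 (k - 1)) (m.1 k)) (lab (m.1 k) (m.1 (k + 1))) := by
  obtain ⟨hagree, hnd⟩ := hU k hk1 hkn m
  have hnd' : lab ((U k m).1 (k - 1)) ((U k m).1 k)
      ≤ lab ((U k m).1 k) ((U k m).1 (k + 1)) := not_lt.mp hnd
  have := label_pair lab hsn hk1 hkn m (U k m) (fun j hj => (hagree j hj).symm)
  rcases this with ⟨h1, h2⟩ | ⟨h1, h2⟩ <;> rw [h1, h2] <;> rw [h1, h2] at hnd' <;>
    constructor <;> omega

/-- The labels of `U k m` away from edges `k-1, k` agree with those of `m`. -/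
lemma U_labels_off {n : ℕ} (lab : P → P → ℤ) (U : ℕ → MaxChain n P → MaxChain n P)
    (hU : IsUSystem n lab U) {k : ℕ} (hk1 : 1 ≤ k) (hkn : k < n)
    (m : MaxChain n P) {j : ℕ} (hj1 : j ≠ k - 1) (hj2 : j ≠ k) :
    lab ((U k m).1 j) ((U k m).1 (j + 1)) = lab (m.1 j) (m.1 (j + 1)) := by
  have h1 := (hU k hk1 hkn m).1 j hj2
  have h2 := (hU k hk1 hkn m).1 (j + 1) (by omega)
  rw [h1, h2]

end BraidAux

/-- The descent-removing operators `U_i` on the maximal chains of an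
`S_n` EL-labeled finite graded poset satisfy the braid relations
`U_i U_{i+1} U_i = U_{i+1} U_i U_{i+1}`. -/
theorem U_braid {P : Type*} [PartialOrder P] [BoundedOrder P] [Fintype P]
    {n : ℕ} (rk : P → ℕ) (hg : IsGraded n rk)
    (lab : P → P → ℤ) (hsn : IsSnELLabeling n lab)
    (U : ℕ → MaxChain n P → MaxChain n P) (hU : IsUSystem n lab U) :
    ∀ i, 1 ≤ i → i + 1 < n → ∀ m : MaxChain n P,
      U i (U (i + 1) (U i m)) = U (i + 1) (U i (U (i + 1) m)) := by
  intro i hi hin m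
  have hin' : i < n := by omega
  have hi1' : 1 ≤ i + 1 := by omega
  set a := lab (m.1 (i - 1)) (m.1 i) with ha
  set b := lab (m.1 i) (m.1 (i + 1)) with hb
  set c0 := lab (m.1 (i + 1)) (m.1 (i + 2)) with hc0
  set m1 := U i m with hm1
  set m2 := U (i + 1) m1 with hm2
  set L := U i m2 with hL
  set m1' := U (i + 1) m with hm1'
  set m2' := U i m1' with hm2'
  set R := U (i + 1) m2' with hR
  -- labels of m1
  obtain ⟨h1a, h1b⟩ := U_labels lab hsn U hU hi hin' m
  have h1c : lab (m1.1 (i + 1)) (m1.1 (i + 2)) = c0 :=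
    U_labels_off lab U hU hi hin' m (by omega) (by omega)
  -- labels of m2
  have e1 : i + 1 - 1 = i := by omega
  obtain ⟨h2a, h2b⟩ := U_labels lab hsn U hU hi1' hin m1
  rw [e1] at h2a h2b
  rw [h1b, h1c] at h2a h2b
  have h2c : lab (m2.1 (i - 1)) (m2.1 i) = min a b := by
    have := U_labels_off lab U hU hi1' hin m1 (j := i - 1) (by omega) (by omega)
    rw [show i - 1 + 1 = i by omega] at this
    rw [this, h1a]
  -- labels of L
  obtain ⟨h3a, h3b⟩ := U_labels lab hsn U hU hi hin' m2
  rw [h2c, h2a] at h3a h3b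
  have h3c : lab (L.1 (i + 1)) (L.1 (i + 2)) = max (max a b) c0 := by
    have := U_labels_off lab U hU hi hin' m2 (j := i + 1) (by omega) (by omega)
    rw [this, h2b]
  -- labels of m1'
  obtain ⟨h4a, h4b⟩ := U_labels lab hsn U hU hi1' hin m
  rw [e1] at h4a h4b
  have h4c : lab (m1'.1 (i - 1)) (m1'.1 i) = a := by
    have := U_labels_off lab U hU hi1' hin m (j := i - 1) (by omega) (by omega)
    rw [show i - 1 + 1 = i by omega] at this
    rw [this]
  -- labels of m2'
  obtain ⟨h5a, h5b⟩ := U_labels lab hsn U hU hi hin' m1'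
  rw [h4c, h4a] at h5a h5b
  have h5c : lab (m2'.1 (i + 1)) (m2'.1 (i + 2)) = max b c0 := by
    have := U_labels_off lab U hU hi hin' m1' (j := i + 1) (by omega) (by omega)
    rw [this, h4b]
  -- labels of R
  obtain ⟨h6a, h6b⟩ := U_labels lab hsn U hU hi1' hin m2'
  rw [e1] at h6a h6b
  rw [h5b, h5c] at h6a h6b
  have h6c : lab (R.1 (i - 1)) (R.1 i) = min a (min b c0) := by
    have := U_labels_off lab U hU hi1' hin m2' (j := i - 1) (by omega) (by omega)
    rw [show i - 1 + 1 = i by omega] at this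
    rw [this, h5a]
  -- no descents
  have hLd1 : ¬ DescentAt lab L.1 i := (hU i hi hin' m2).2
  have hLd2 : ¬ DescentAt lab L.1 (i + 1) := by
    simp only [DescentAt, not_lt, e1]
    rw [h3c, h3b]
    omega
  have hRd2 : ¬ DescentAt lab R.1 (i + 1) := (hU (i + 1) hi1' hin m2').2
  have hRd1 : ¬ DescentAt lab R.1 i := by
    simp only [DescentAt, not_lt]
    rw [h6c, h6a]
    omega
  -- agreement off {i, i+1}
  have hLm : ∀ j, j ≠ i → j ≠ i + 1 → L.1 j = m.1 j := by
    intro j hj1 hj2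
    rw [(hU i hi hin' m2).1 j hj1, (hU (i + 1) hi1' hin m1).1 j hj2,
      (hU i hi hin' m).1 j hj1]
  have hRm : ∀ j, j ≠ i → j ≠ i + 1 → R.1 j = m.1 j := by
    intro j hj1 hj2
    rw [(hU (i + 1) hi1' hin m2').1 j hj2, (hU i hi hin' m1').1 j hj1,
      (hU (i + 1) hi1' hin m).1 j hj2]
  exact chain_unique3 lab hsn hi hin L R
    (fun j h1 h2 => (hLm j h1 h2).trans (hRm j h1 h2).symm) hLd1 hLd2 hRd1 hRd2
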